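/- Suppose nonnegative reals A, B, λ, δ_Φ are given with λ > 0, and define P = ((δ_Φ+1)A + √((δ_Φ+1)²A² + 4Bλ(δ_Φ+1)))² / (4λ²). Then u = √P is the positive root of u² - (δ_Φ+1)Au/λ - (δ_Φ+1)B/λ = 0, and consequently for any sequence (vₜ) of nonnegative reals with v₁ = 0 and t·v_{t+1} ≤ (t-1)vₜ + (δ_Φ+1)(A√vₜ + B)/λ, one has vₜ ≤ P for all t. -/

import Mathlib

/-- The fixed point P of the AVM norm recursion: u = √P is the positive root of
u² - (δ_Φ+1)Au/λ - (δ_Φ+1)B/λ = 0, and every nonnegative sequence satisfying the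
recursive bound t·v_{t+1} ≤ (t-1)vₜ + (δ_Φ+1)(A√vₜ + B)/λ with v₁ = 0 stays below P. -/
theorem avm_norm_recursion_bound
    (A B lam δΦ : ℝ) (hA : 0 ≤ A) (hB : 0 ≤ B) (hδ : 0 ≤ δΦ) (hlam : 0 < lam) :
    let P := ((δΦ + 1) * A + Real.sqrt ((δΦ + 1) ^ 2 * A ^ 2 + 4 * B * lam * (δΦ + 1))) ^ 2
      / (4 * lam ^ 2)
    (Real.sqrt P ^ 2 - (δΦ + 1) * A * Real.sqrt P / lam - (δΦ + 1) * B / lam = 0) ∧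
      ∀ v : ℕ → ℝ, (∀ t, 0 ≤ v t) → v 1 = 0 →
        (∀ t : ℕ, 1 ≤ t →
          (t : ℝ) * v (t + 1) ≤ ((t : ℝ) - 1) * v t + (δΦ + 1) * (A * Real.sqrt (v t) + B) / lam) →
        ∀ t : ℕ, 1 ≤ t → v t ≤ P := by
  intro P
  set c := δΦ + 1 with hc
  have hc0 : 0 < c := by positivity
  set D := Real.sqrt (c ^ 2 * A ^ 2 + 4 * B * lam * c) with hD
  have hD0 : 0 ≤ D := Real.sqrt_nonneg _
  have hDsq : D ^ 2 = c ^ 2 * A ^ 2 + 4 * B * lam * c := by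
    rw [hD, Real.sq_sqrt]; positivity
  have hu0 : 0 ≤ (c * A + D) / (2 * lam) := by positivity
  have hPdef : P = ((c * A + D) / (2 * lam)) ^ 2 := by
    show ((c) * A + D) ^ 2 / (4 * lam ^ 2) = _
    rw [div_pow]
    ring_nf
  have hsqrtP : Real.sqrt P = (c * A + D) / (2 * lam) := by
    rw [hPdef, Real.sqrt_sq hu0]
  have hroot : Real.sqrt P ^ 2 - c * A * Real.sqrt P / lam - c * B / lam = 0 := by
    rw [hsqrtP]
    field_simp
    linear_combination hDsq
  refine ⟨hroot, ?_⟩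
  intro v hv hv1 hrec
  have hP0 : 0 ≤ P := by rw [hPdef]; positivity
  have key : c * (A * Real.sqrt P + B) / lam = P := by
    have h2 : Real.sqrt P ^ 2 = P := Real.sq_sqrt hP0
    have := hroot
    field_simp at this ⊢
    nlinarith [this, h2]
  intro t ht
  induction t with
  | zero => omega
  | succ n ih =>
    rcases Nat.lt_or_ge 1 (n + 1) with h1 | h1
    · have hn1 : 1 ≤ n := by omega
      have hvn : v n ≤ P := ih hn1
      have hs : Real.sqrt (v n) ≤ Real.sqrt P := Real.sqrt_le_sqrt hvn
      have h := hrec n hn1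
      have hn0 : (0:ℝ) < n := by exact_mod_cast hn1
      have hn1' : (1:ℝ) ≤ (n:ℝ) := by exact_mod_cast hn1
      have hstep : (n : ℝ) * v (n + 1) ≤ (n : ℝ) * P := by
        calc (n : ℝ) * v (n+1) ≤ ((n:ℝ)-1) * v n + c * (A * Real.sqrt (v n) + B) / lam := h
        _ ≤ ((n:ℝ)-1) * P + c * (A * Real.sqrt P + B) / lam := by
            gcongr
        _ = ((n:ℝ)-1) * P + P := by rw [key]
        _ = (n:ℝ) * P := by ring
      exact le_of_mul_le_mul_left hstep hn0
    · have : n = 0 := by omega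
      subst this
      rw [hv1]; exact hP0
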